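/- Let f be a group strategy-proof local priority mechanism for a constraint C, and let A be the set of implementable local compromiser assignments that induce f. Then A is closed under pointwise unions: if α, α′ ∈ A, then the map x ↦ α(x) ∪ α′(x) is an implementable local compromiser assignment that induces f. -/

import Mathlib

/- Common framework: constrained allocation, local priority mechanisms
   (Root & Ahn, "Local Priority Mechanisms"). Agents `N`, objects `O`.
   A strict preference is encoded as a `LinearOrder` on `O`, where
   `pi.lt b a` means `a` is strictly preferred to `b`. -/

open Classical

noncomputable section

variable {N O : Type}

/-- `a` is strictly preferred to `b` under `pi`. -/
def sPref (pi : LinearOrder O) (a b : O) : Prop := pi.lt b a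

/-- `a` is weakly preferred to `b` under `pi`. -/
def wPref (pi : LinearOrder O) (a b : O) : Prop := a = b ∨ pi.lt b a

/-- The favourite (top-ranked) object under `pi`. -/
def topObj [Fintype O] [Nonempty O] (pi : LinearOrder O) : O :=
  @Finset.max' O pi Finset.univ Finset.univ_nonempty

/-- `tau1 p` is the allocation assigning each agent her favourite object. -/
def tau1 [Fintype O] [Nonempty O] (p : N → LinearOrder O) : N → O :=
  fun i => topObj (p i)

/-- The strict lower contour set of `a` under `pi`, as a finset. -/
def LCfin [Fintype O] (pi : LinearOrder O) (a : O) : Finset O :=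
  Finset.univ.filter fun b => pi.lt b a

/-- The best element of the strict lower contour set of `a` (junk value `a` if empty). -/
def bestLC [Fintype O] (pi : LinearOrder O) (a : O) : O :=
  if h : (LCfin pi a).Nonempty then @Finset.max' O pi _ h else a

/-- At `x`, no local compromiser has an empty strict lower contour set. -/
def lpNoFail [Fintype O] (α : (N → O) → Set N) (p : N → LinearOrder O) (x : N → O) : Prop :=
  ∀ i ∈ α x, (LCfin (p i) (x i)).Nonempty

/-- One step of the local priority algorithm: all local compromisers move to their
next-favourite object, everyone else stays put. -/
def lpStep [Fintype O] (α : (N → O) → Set N) (p : N → LinearOrder O) (x : N → O) : N → O :=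
  fun k => if k ∈ α x then bestLC (p k) (x k) else x k

/-- The local priority algorithm for `α` at profile `p` terminates (without failure)
returning the feasible allocation `y`. -/
def lpRunsTo [Fintype O] [Nonempty O] (C : Set (N → O)) (α : (N → O) → Set N)
    (p : N → LinearOrder O) (y : N → O) : Prop :=
  ∃ (m : ℕ) (x : ℕ → N → O),
    x 0 = tau1 p ∧
    (∀ t < m, x t ∉ C ∧ lpNoFail α p (x t) ∧ x (t + 1) = lpStep α p (x t)) ∧
    x m = y ∧ y ∈ C

/-- `α` is a local compromiser assignment for the constraint `C`. -/
def IsLCA (C : Set (N → O)) (α : (N → O) → Set N) : Prop :=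
  ∀ x, (x ∉ C → (α x).Nonempty) ∧ (x ∈ C → α x = ∅)

/-- `α` is implementable: the local priority algorithm returns a feasible
allocation (never the failure symbol) on every profile. -/
def lpImplementable [Fintype O] [Nonempty O] (C : Set (N → O)) (α : (N → O) → Set N) : Prop :=
  ∀ p : N → LinearOrder O, ∃ y, lpRunsTo C α p y

/-- `α` is an implementable local compromiser assignment for `C` inducing the mechanism `f`,
i.e. `f = LP_α`. -/
def lpInduces [Fintype O] [Nonempty O] (C : Set (N → O)) (α : (N → O) → Set N)
    (f : (N → LinearOrder O) → N → O) : Prop :=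
  IsLCA C α ∧ ∀ p, lpRunsTo C α p (f p)

/-- The local priority mechanism `LP_α` (well defined whenever `α` is implementable,
since the algorithm is deterministic). -/
def LPmech [Fintype O] [Nonempty O] (C : Set (N → O)) (α : (N → O) → Set N)
    (p : N → LinearOrder O) : N → O :=
  if h : ∃ y, lpRunsTo C α p y then h.choose else fun _ => Classical.arbitrary O

/-- Group strategy-proofness. -/
def GSP (f : (N → LinearOrder O) → N → O) : Prop :=
  ∀ (p p' : N → LinearOrder O) (M : Set N), M.Nonempty → (∀ j ∉ M, p' j = p j) →
    ¬ ((∀ j ∈ M, wPref (p j) (f p' j) (f p j)) ∧ ∃ k ∈ M, sPref (p k) (f p' k) (f p k))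

/-- (Individual) strategy-proofness. -/
def StratProof (f : (N → LinearOrder O) → N → O) : Prop :=
  ∀ (p p' : N → LinearOrder O) (i : N), (∀ j, j ≠ i → p' j = p j) →
    ¬ sPref (p i) (f p' i) (f p i)

/-- Nonbossiness. -/
def Nonbossy (f : (N → LinearOrder O) → N → O) : Prop :=
  ∀ (p p' : N → LinearOrder O) (i : N), (∀ j, j ≠ i → p' j = p j) →
    f p' i = f p i → f p' = f p

/-- Maskin monotonicity. -/
def MaskinMono (f : (N → LinearOrder O) → N → O) : Prop :=
  ∀ p p' : N → LinearOrder O,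
    (∀ (i : N) (b : O), (p i).lt b (f p i) → (p' i).lt b (f p i)) → f p' = f p

/-- Unanimity. -/
def Unanimity [Fintype O] [Nonempty O] (C : Set (N → O))
    (f : (N → LinearOrder O) → N → O) : Prop :=
  ∀ p, tau1 p ∈ C → f p = tau1 p

/-- The Fixed compromiser condition. -/
def FixedComp [Fintype O] [Nonempty O] (C : Set (N → O))
    (f : (N → LinearOrder O) → N → O) : Prop :=
  ∀ μ, μ ∉ C → ∃ i : N, ∀ p, tau1 p = μ → f p i ≠ μ i

/-- `pi'` is obtained from `pi` by moving `c` to the bottom of the ranking. -/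
def MoveBottom (pi pi' : LinearOrder O) (c : O) : Prop :=
  (∀ b, b ≠ c → pi'.lt c b) ∧ (∀ a b, a ≠ c → b ≠ c → (pi'.lt a b ↔ pi.lt a b))

/-- Compromiser invariance. -/
def CompInv [Fintype O] [Nonempty O] (C : Set (N → O))
    (f : (N → LinearOrder O) → N → O) : Prop :=
  ∀ μ, μ ∉ C → ∀ p p' : N → LinearOrder O, tau1 p = μ →
    (∀ i, (∀ q, tau1 q = μ → f q i ≠ μ i) → MoveBottom (p i) (p' i) (μ i)) →
    (∀ i, ¬ (∀ q, tau1 q = μ → f q i ≠ μ i) → p' i = p i) →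
    f p' = f p

/-- Pareto efficiency relative to the constraint `C`. -/
def ParetoEff (C : Set (N → O)) (f : (N → LinearOrder O) → N → O) : Prop :=
  ∀ p, ¬ ∃ ν ∈ C, (∀ i, wPref (p i) (ν i) (f p i)) ∧ ∃ k, sPref (p k) (ν k) (f p k)

/-- `diffSet x y = d(x,y)`, the set of agents on which `x` and `y` differ. -/
def diffSet (x y : N → O) : Set N := {i | x i ≠ y i}

/-- Forward consistency. -/
def ForwardCons (α : (N → O) → Set N) : Prop :=
  ∀ x y : N → O, diffSet x y ⊆ α x → α x \ diffSet x y ⊆ α y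

/-- The sequence of allocations `z 0, …, z m` is acyclic. -/
def AcyclicSeq (z : ℕ → N → O) (m : ℕ) : Prop :=
  ∀ (i : N) (r s t : ℕ), r < s → s < t → t ≤ m → z r i = z t i → z s i = z r i

/-- `x` and `y` are `i`-connected under `α`. -/
def IConn (α : (N → O) → Set N) (i : N) (x y : N → O) : Prop :=
  ∃ m : ℕ, 1 ≤ m ∧ ∃ z : ℕ → N → O,
    z 0 = x ∧ z m = y ∧ AcyclicSeq z m ∧ diffSet (z 0) (z 1) = {i} ∧
    ∀ l < m, diffSet (z l) (z (l + 1)) ⊆ α (z l)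

/-- Backward consistency. -/
def BackCons (C : Set (N → O)) (α : (N → O) → Set N) : Prop :=
  ∀ (i : N) (x y : N → O), x ∉ C → y ∉ C → IConn α i x y →
    ∀ x' : N → O, diffSet x x' ⊆ α y → i ∉ diffSet x x' → i ∈ α x'

/-- The pointwise union of all implementable local compromiser assignments inducing `f`. -/
def alphaUnionAll [Fintype O] [Nonempty O] (C : Set (N → O))
    (f : (N → LinearOrder O) → N → O) : (N → O) → Set N :=
  fun x => {i | ∃ β, lpInduces C β f ∧ i ∈ β x}

end

noncomputable section AuxProof

open Finset

lemma wPref_iff_le {O : Type} (pi : LinearOrder O) {a b : O} :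
    wPref pi a b ↔ pi.le b a := by
  letI := pi
  constructor
  · rintro (rfl | hlt)
    · exact le_refl _
    · exact le_of_lt hlt
  · intro hle
    rcases eq_or_lt_of_le hle with hh | hh
    · exact Or.inl hh.symm
    · exact Or.inr hh

lemma mem_LCfin {O : Type} [Fintype O] (pi : LinearOrder O) {a b : O} :
    b ∈ LCfin pi a ↔ pi.lt b a := by
  simp [LCfin]

lemma bestLC_lt {O : Type} [Fintype O] (pi : LinearOrder O) {a : O}
    (h : (LCfin pi a).Nonempty) : pi.lt (bestLC pi a) a := by
  rw [bestLC, dif_pos h]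
  exact (mem_LCfin pi).1 (Finset.max'_mem _ h)

lemma le_bestLC {O : Type} [Fintype O] (pi : LinearOrder O) {a b : O}
    (hb : pi.lt b a) : pi.le b (bestLC pi a) := by
  have hne : (LCfin pi a).Nonempty := ⟨b, (mem_LCfin pi).2 hb⟩
  rw [bestLC, dif_pos hne]
  exact Finset.le_max' _ _ ((mem_LCfin pi).2 hb)

lemma le_topObj {O : Type} [Fintype O] [Nonempty O] (pi : LinearOrder O) (b : O) :
    pi.le b (topObj pi) :=
  Finset.le_max' _ _ (Finset.mem_univ b)

lemma LCfin_card_lt {O : Type} [Fintype O] (pi : LinearOrder O) {a b : O}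
    (hba : pi.lt b a) : (LCfin pi b).card < (LCfin pi a).card := by
  letI := pi
  apply Finset.card_lt_card
  have hsub : LCfin pi b ⊆ LCfin pi a := by
    intro c hc
    rw [mem_LCfin pi] at hc ⊢
    exact lt_trans hc hba
  refine (Finset.ssubset_iff_of_subset hsub).2 ⟨b, (mem_LCfin pi).2 hba, ?_⟩
  intro hmem
  exact lt_irrefl b ((mem_LCfin pi).1 hmem)

/-- the strict relation putting the strict upper contour of `a` at the bottom -/
def mbRel {O : Type} (pi : LinearOrder O) (a x y : O) : Prop :=
  (pi.lt a x ∧ ¬ pi.lt a y) ∨ ((pi.lt a x ↔ pi.lt a y) ∧ pi.lt x y)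

lemma mbRel_trichot {O : Type} (pi : LinearOrder O) (a x y : O) :
    mbRel pi a x y ∨ x = y ∨ mbRel pi a y x := by
  letI := pi
  unfold mbRel
  by_cases hx : pi.lt a x <;> by_cases hy : pi.lt a y
  · rcases lt_trichotomy x y with hh | hh | hh
    · exact Or.inl (Or.inr ⟨iff_of_true hx hy, hh⟩)
    · exact Or.inr (Or.inl hh)
    · exact Or.inr (Or.inr (Or.inr ⟨iff_of_true hy hx, hh⟩))
  · exact Or.inl (Or.inl ⟨hx, hy⟩)
  · exact Or.inr (Or.inr (Or.inl ⟨hy, hx⟩))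
  · rcases lt_trichotomy x y with hh | hh | hh
    · exact Or.inl (Or.inr ⟨iff_of_false hx hy, hh⟩)
    · exact Or.inr (Or.inl hh)
    · exact Or.inr (Or.inr (Or.inr ⟨iff_of_false hy hx, hh⟩))

lemma mbRel_irrefl {O : Type} (pi : LinearOrder O) (a : O) :
    ∀ x, ¬ mbRel pi a x x := by
  letI := pi
  rintro x (⟨h1, h2⟩ | ⟨_, hh⟩)
  · exact h2 h1
  · exact lt_irrefl x hh

lemma mbRel_trans {O : Type} (pi : LinearOrder O) (a : O) :
    ∀ x y z, mbRel pi a x y → mbRel pi a y z → mbRel pi a x z := by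
  letI := pi
  rintro x y z (⟨hx, hy⟩ | ⟨hxy, h1⟩) (⟨hy', hz⟩ | ⟨hyz, h2⟩)
  · exact absurd hy' hy
  · exact Or.inl ⟨hx, fun hz => hy (hyz.2 hz)⟩
  · exact Or.inl ⟨hxy.2 hy', hz⟩
  · exact Or.inr ⟨hxy.trans hyz, lt_trans h1 h2⟩

/-- The linear order obtained from `pi` by moving the strict upper contour of `a`
to the bottom (so that `a` becomes the top object). -/
def moveBot {O : Type} (pi : LinearOrder O) (a : O) : LinearOrder O :=
  letI : DecidableRel (mbRel pi a) := fun _ _ => Classical.dec _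
  haveI : IsStrictTotalOrder O (mbRel pi a) :=
    { trichotomous := fun x y h1 h2 => by
        rcases mbRel_trichot pi a x y with h | h | h
        exacts [absurd h h1, h, absurd h h2]
      irrefl := mbRel_irrefl pi a
      trans := mbRel_trans pi a }
  linearOrderOfSTO (mbRel pi a)

lemma moveBot_lt {O : Type} (pi : LinearOrder O) (a x y : O) :
    (moveBot pi a).lt x y ↔ mbRel pi a x y := Iff.rfl

lemma moveBot_le {O : Type} (pi : LinearOrder O) (a x y : O) :
    (moveBot pi a).le x y ↔ (x = y ∨ mbRel pi a x y) := Iff.rfl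

lemma moveBot_le_self {O : Type} (pi : LinearOrder O) (a b : O) :
    (moveBot pi a).le b a := by
  letI := pi
  rw [moveBot_le]
  by_cases hba : b = a
  · exact Or.inl hba
  · right
    by_cases hU : pi.lt a b
    · exact Or.inl ⟨hU, lt_irrefl a⟩
    · refine Or.inr ⟨iff_of_false hU (lt_irrefl a), ?_⟩
      rcases lt_trichotomy b a with hh | hh | hh
      · exact hh
      · exact absurd hh hba
      · exact absurd hh hU

lemma top_moveBot {O : Type} [Fintype O] [Nonempty O] (pi : LinearOrder O) (a : O) :
    topObj (moveBot pi a) = a := by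
  have h1 : (moveBot pi a).le (topObj (moveBot pi a)) a := by
    letI := moveBot pi a
    exact Finset.max'_le _ _ _ (fun b _ => moveBot_le_self pi a b)
  have h2 : (moveBot pi a).le a (topObj (moveBot pi a)) := le_topObj _ _
  letI := moveBot pi a
  exact le_antisymm h1 h2

lemma moveBot_mono {O : Type} (pi : LinearOrder O) {a b c : O}
    (hbc : pi.lt b c) (hca : pi.le c a) : (moveBot pi a).lt b c := by
  letI := pi
  rw [moveBot_lt]
  have h1 : ¬ pi.lt a b := not_lt.2 (le_of_lt (lt_of_lt_of_le hbc hca))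
  have h2 : ¬ pi.lt a c := not_lt.2 hca
  exact Or.inr ⟨iff_of_false h1 h2, hbc⟩

section Mech

variable {N O : Type}

lemma gsp_sp (f : (N → LinearOrder O) → N → O) (hg : GSP f) : StratProof f := by
  intro p p' i hdiff hspref
  refine hg p p' {i} ⟨i, rfl⟩ (fun j hj => hdiff j (by simpa using hj)) ⟨?_, i, rfl, hspref⟩
  intro j hj
  rw [Set.mem_singleton_iff] at hj
  subst hj
  exact Or.inr hspref

lemma gsp_nb (f : (N → LinearOrder O) → N → O) (hg : GSP f) : Nonbossy f := by
  intro p p' i hdiff hii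
  by_contra hne
  obtain ⟨j, hj⟩ : ∃ j, f p' j ≠ f p j := by
    by_contra hh
    push_neg at hh
    exact hne (funext hh)
  have hji : j ≠ i := fun e => hj (e ▸ hii)
  have hpj : p' j = p j := hdiff j hji
  have hik : ∀ k, k ∉ ({i, j} : Set N) → k ≠ i := by
    intro k hk e
    exact hk (by rw [e]; exact Set.mem_insert i {j})
  have hcase : (p j).lt (f p' j) (f p j) ∨ (p j).lt (f p j) (f p' j) := by
    letI := p j
    exact lt_or_gt_of_ne hj
  rcases hcase with hlt | hgt
  · -- group {i, j} manipulates from p' to p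
    refine hg p' p {i, j} ⟨i, Set.mem_insert i {j}⟩
      (fun k hk => (hdiff k (hik k hk)).symm) ⟨?_, j, Set.mem_insert_of_mem i rfl, ?_⟩
    · intro k hk
      rcases Set.mem_insert_iff.1 hk with rfl | hk'
      · exact Or.inl hii.symm
      · rw [Set.mem_singleton_iff] at hk'
        subst hk'
        rw [hpj]
        exact Or.inr hlt
    · show (p' j).lt (f p' j) (f p j)
      rw [hpj]
      exact hlt
  · -- group {i, j} manipulates from p to p'
    refine hg p p' {i, j} ⟨i, Set.mem_insert i {j}⟩
      (fun k hk => hdiff k (hik k hk)) ⟨?_, j, Set.mem_insert_of_mem i rfl, hgt⟩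
    intro k hk
    rcases Set.mem_insert_iff.1 hk with rfl | hk'
    · exact Or.inl hii
    · rw [Set.mem_singleton_iff] at hk'
      subst hk'
      exact Or.inr hgt

lemma mm_of [Fintype N] (f : (N → LinearOrder O) → N → O)
    (hsp : StratProof f) (hnb : Nonbossy f) : MaskinMono f := by
  classical
  intro p p' hprem
  have key : ∀ S : Finset N, f (fun j => if j ∈ S then p' j else p j) = f p := by
    intro S
    induction S using Finset.induction_on with
    | empty => simp
    | @insert i S hiS ih =>
      set q : N → LinearOrder O := fun j => if j ∈ S then p' j else p j with hqdef
      set q' : N → LinearOrder O := fun j => if j ∈ insert i S then p' j else p j with hq'def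
      have hdiff : ∀ j, j ≠ i → q' j = q j := by
        intro j hj
        simp only [hqdef, hq'def, Finset.mem_insert]
        by_cases hjS : j ∈ S
        · simp [hjS]
        · simp [hjS, hj]
      have hqi : q i = p i := by simp [hqdef, hiS]
      have hq'i : q' i = p' i := by simp [hq'def]
      have h1 := hsp q q' i hdiff
      have h2 := hsp q' q i (fun j hj => (hdiff j hj).symm)
      rw [hqi, ih] at h1
      rw [hq'i, ih] at h2
      have heq : f q' i = f p i := by
        by_contra hne
        have hlt : (p i).lt (f q' i) (f p i) := by
          letI := p i
          rcases lt_trichotomy (f q' i) (f p i) with hh | hh | hh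
          · exact hh
          · exact absurd hh hne
          · exact absurd hh h1
        exact h2 (hprem i (f q' i) hlt)
      have hff : f q' = f q := hnb q q' i hdiff (by rw [heq, ih])
      rw [hff, ih]
  have huniv : (fun j => if j ∈ (Finset.univ : Finset N) then p' j else p j) = p' := by
    funext j
    simp
  rw [← huniv]
  exact key Finset.univ

variable [Fintype O] [Nonempty O]

lemma run_mono {C : Set (N → O)} {γ : (N → O) → Set N}
    {q : N → LinearOrder O} {z : ℕ → N → O} {m : ℕ}
    (hstep : ∀ t < m, z t ∉ C ∧ lpNoFail γ q (z t) ∧ z (t + 1) = lpStep γ q (z t))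
    (i : N) : ∀ s t, s ≤ t → t ≤ m → (q i).le (z t i) (z s i) := by
  intro s t
  induction t with
  | zero =>
    intro h1 _
    have : s = 0 := Nat.le_zero.1 h1
    subst this
    letI := q i
    exact le_refl _
  | succ t ih =>
    intro h1 h2
    by_cases hs : s = t + 1
    · subst hs
      letI := q i
      exact le_refl _
    · have hs' : s ≤ t := Nat.lt_succ_iff.1 (lt_of_le_of_ne h1 hs)
      have htm : t < m := lt_of_lt_of_le (Nat.lt_succ_self t) h2
      have hle1 : (q i).le (z (t + 1) i) (z t i) := by
        rw [(hstep t htm).2.2]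
        simp only [lpStep]
        by_cases hi : i ∈ γ (z t)
        · rw [if_pos hi]
          have hne := (hstep t htm).2.1 i hi
          letI := q i
          exact le_of_lt (bestLC_lt _ hne)
        · rw [if_neg hi]
          letI := q i
          exact le_refl _
      letI := q i
      exact le_trans hle1 (ih hs' (le_of_lt htm))

lemma lemB {C : Set (N → O)} {γ : (N → O) → Set N} {f : (N → LinearOrder O) → N → O}
    (hγ : lpInduces C γ f) (q : N → LinearOrder O) (hq : tau1 q ∉ C)
    {i : N} (hi : i ∈ γ (tau1 q)) : f q i ≠ tau1 q i := by
  obtain ⟨m, z, hz0, hstep, hzm, hfC⟩ := hγ.2 q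
  have hm : 0 < m := by
    rcases Nat.eq_zero_or_pos m with rfl | hh
    · have e : tau1 q = f q := by rw [← hz0, hzm]
      exact absurd (e ▸ hfC) hq
    · exact hh
  obtain ⟨hC0, hnf, hstep0⟩ := hstep 0 hm
  have hz1i : z 1 i = bestLC (q i) (z 0 i) := by
    rw [hstep0]
    simp only [lpStep]
    rw [if_pos (by rw [hz0]; exact hi)]
  have hlt : (q i).lt (z 1 i) (z 0 i) := by
    rw [hz1i]
    exact bestLC_lt (q i) (hnf i (by rw [hz0]; exact hi))
  have hle : (q i).le (z m i) (z 1 i) := run_mono hstep i 1 m hm (le_refl m)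
  intro he
  have hlt2 : (q i).lt (z m i) (z 0 i) := by
    letI := q i
    exact lt_of_le_of_lt hle hlt
  rw [hzm, hz0, he] at hlt2
  letI := q i
  exact lt_irrefl _ hlt2

lemma unan_of_induces {C : Set (N → O)} {γ : (N → O) → Set N}
    {f : (N → LinearOrder O) → N → O}
    (hγ : lpInduces C γ f) (q : N → LinearOrder O) (hq : tau1 q ∈ C) :
    f q = tau1 q := by
  obtain ⟨m, z, hz0, hstep, hzm, hfC⟩ := hγ.2 q
  rcases Nat.eq_zero_or_pos m with rfl | hm
  · rw [← hzm, hz0]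
  · have h0 := (hstep 0 hm).1
    rw [hz0] at h0
    exact absurd hq h0

end Mech

end AuxProof

/-- Proposition 4: for a group strategy-proof local priority mechanism
`f`, the set of implementable local compromiser assignments inducing `f` is closed under
pointwise unions. -/
theorem lca_closed_under_union
    {N O : Type} [Fintype N] [Fintype O] [Nonempty O]
    (C : Set (N → O)) (hC : C.Nonempty)
    (f : (N → LinearOrder O) → N → O) (hgsp : GSP f)
    (α α' : (N → O) → Set N)
    (h : lpInduces C α f) (h' : lpInduces C α' f) :
    lpInduces C (fun x => α x ∪ α' x) f := by
  classical
  have hmm : MaskinMono f := mm_of f (gsp_sp f hgsp) (gsp_nb f hgsp)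
  constructor
  · -- IsLCA for the union
    intro x
    refine ⟨fun hx => ?_, fun hx => ?_⟩
    · obtain ⟨i, hi⟩ := (h.1 x).1 hx
      exact ⟨i, Or.inl hi⟩
    · show α x ∪ α' x = ∅
      rw [(h.1 x).2 hx, (h'.1 x).2 hx, Set.empty_union]
  · intro p
    set β : (N → O) → Set N := fun x => α x ∪ α' x with hβdef
    let x : ℕ → N → O :=
      fun t => Nat.rec (tau1 p) (fun _ xt => if xt ∈ C then xt else lpStep β p xt) t
    have hx0 : x 0 = tau1 p := rfl
    have hxs : ∀ t, x (t + 1) = if x t ∈ C then x t else lpStep β p (x t) := fun _ => rfl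
    -- profiles with top x t and same f-value
    have hqt : ∀ t, (∀ i, wPref (p i) (x t i) (f p i)) →
        ∃ q : N → LinearOrder O, tau1 q = x t ∧ f q = f p := by
      intro t hinv
      refine ⟨fun j => moveBot (p j) (x t j), funext fun j => top_moveBot (p j) (x t j), ?_⟩
      apply hmm
      intro i b hb
      exact moveBot_mono (p i) hb ((wPref_iff_le (p i)).1 (hinv i))
    have hkey : ∀ t, (∀ i, wPref (p i) (x t i) (f p i)) → x t ∉ C →
        ∀ i ∈ β (x t), (p i).lt (f p i) (x t i) := by
      intro t hinv hCt i hi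
      obtain ⟨q, hq1, hq2⟩ := hqt t hinv
      have hni : f p i ≠ x t i := by
        rcases hi with hi | hi
        · have hh := lemB h q (by rw [hq1]; exact hCt) (show i ∈ α (tau1 q) by rw [hq1]; exact hi)
          rw [hq1, hq2] at hh
          exact hh
        · have hh := lemB h' q (by rw [hq1]; exact hCt) (show i ∈ α' (tau1 q) by rw [hq1]; exact hi)
          rw [hq1, hq2] at hh
          exact hh
      rcases hinv i with he | hl
      · exact absurd he.symm hni
      · exact hl
    have hinv : ∀ t, ∀ i, wPref (p i) (x t i) (f p i) := by
      intro t
      induction t with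
      | zero =>
        intro i
        rw [hx0, wPref_iff_le]
        exact le_topObj (p i) (f p i)
      | succ t ih =>
        intro i
        by_cases hCt : x t ∈ C
        · rw [hxs, if_pos hCt]
          exact ih i
        · rw [hxs, if_neg hCt]
          simp only [lpStep]
          by_cases hib : i ∈ β (x t)
          · rw [if_pos hib, wPref_iff_le]
            exact le_bestLC (p i) (hkey t ih hCt i hib)
          · rw [if_neg hib]
            exact ih i
    have hnofail : ∀ t, x t ∉ C → lpNoFail β p (x t) := by
      intro t hCt i hi
      exact ⟨f p i, (mem_LCfin (p i)).2 (hkey t (hinv t) hCt i hi)⟩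
    have hdec : ∀ t, x t ∉ C →
        (∑ i, (LCfin (p i) (x (t + 1) i)).card) < ∑ i, (LCfin (p i) (x t i)).card := by
      intro t hCt
      have hstep : x (t + 1) = lpStep β p (x t) := by rw [hxs, if_neg hCt]
      have hless : ∀ i, i ∈ β (x t) →
          (LCfin (p i) (x (t + 1) i)).card < (LCfin (p i) (x t i)).card := by
        intro i hib
        have hxi : x (t + 1) i = bestLC (p i) (x t i) := by
          rw [hstep]; simp only [lpStep]; rw [if_pos hib]
        rw [hxi]
        exact LCfin_card_lt (p i) (bestLC_lt (p i) (hnofail t hCt i hib))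
      apply Finset.sum_lt_sum
      · intro i _
        by_cases hib : i ∈ β (x t)
        · exact le_of_lt (hless i hib)
        · have hxi : x (t + 1) i = x t i := by
            rw [hstep]; simp only [lpStep]; rw [if_neg hib]
          rw [hxi]
      · obtain ⟨i, hi⟩ := (h.1 (x t)).1 hCt
        exact ⟨i, Finset.mem_univ i, hless i (Or.inl hi)⟩
    have hterm : ∃ t, x t ∈ C := by
      by_contra hc
      push_neg at hc
      have hmono : ∀ t, (∑ i, (LCfin (p i) (x t i)).card) + t ≤
          ∑ i, (LCfin (p i) (x 0 i)).card := by
        intro t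
        induction t with
        | zero => simp
        | succ t ih =>
          have := hdec t (hc t)
          omega
      have := hmono ((∑ i, (LCfin (p i) (x 0 i)).card) + 1)
      omega
    let m := Nat.find hterm
    have hm : x m ∈ C := Nat.find_spec hterm
    have hltm : ∀ t, t < m → x t ∉ C := fun t ht => Nat.find_min hterm ht
    have hfin : f p = x m := by
      obtain ⟨q, hq1, hq2⟩ := hqt m (hinv m)
      rw [← hq2, unan_of_induces h q (by rw [hq1]; exact hm), hq1]
    exact ⟨m, x, hx0,
      fun t ht => ⟨hltm t ht, hnofail t (hltm t ht), by rw [hxs, if_neg (hltm t ht)]⟩,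
      hfin.symm, by rw [hfin]; exact hm⟩
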